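/- Assume k_{-w₀(α)}=k_α for all α∈Π. Let (π,X) be an irreducible finite-dimensional H-module admitting a nonzero •-invariant hermitian form. Then X admits a nonzero ★-invariant hermitian form if and only if the δ-twist (π∘δ, X) is isomorphic to (π,X) as H-modules. -/

import Mathlib

/- Formalization of the setting of Barbasch–Ciubotaru, "Hermitian forms for
affine Hecke algebras": a reduced root system, Weyl group, parameters,
complexifications, and the graded affine Hecke algebra. -/

noncomputable section

structure GHA where
  (V Vd VC VdC W H : Type)
  [addV : AddCommGroup V] [modV : Module ℝ V] [fdV : FiniteDimensional ℝ V]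
  [addVd : AddCommGroup Vd] [modVd : Module ℝ Vd] [fdVd : FiniteDimensional ℝ Vd]
  [deqV : DecidableEq V] [deqW : DecidableEq W]
  [addVC : AddCommGroup VC] [modVC : Module ℂ VC]
  [addVdC : AddCommGroup VdC] [modVdC : Module ℂ VdC]
  [grpW : Group W] [finW : Fintype W]
  [ringH : Ring H] [algH : Algebra ℂ H]
  -- the perfect bilinear pairing between V and V∨
  pairR : V →ₗ[ℝ] Vd →ₗ[ℝ] ℝ
  pair_nondeg_left : ∀ v : V, (∀ u : Vd, pairR v u = 0) → v = 0
  pair_nondeg_right : ∀ u : Vd, (∀ v : V, pairR v u = 0) → u = 0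
  -- roots, coroots, and the bijection α ↦ α∨
  roots : Finset V
  corootsF : Finset Vd
  cv : V → Vd
  roots_ne_zero : ∀ α ∈ roots, α ≠ 0
  coroots_ne_zero : ∀ β ∈ corootsF, β ≠ 0
  cv_mem : ∀ α ∈ roots, cv α ∈ corootsF
  cv_injOn : Set.InjOn cv roots
  cv_surjOn : ∀ β ∈ corootsF, ∃ α ∈ roots, cv α = β
  pair_cv_self : ∀ α ∈ roots, pairR α (cv α) = 2
  reflV_mem : ∀ α ∈ roots, ∀ β ∈ roots, β - pairR β (cv α) • α ∈ roots
  reflVd_mem : ∀ α ∈ roots, ∀ β ∈ corootsF, β - pairR α β • cv α ∈ corootsF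
  reduced : ∀ α ∈ roots, (2 : ℝ) • α ∉ roots
  -- simple roots and positive roots
  simples : Finset V
  posRoots : Finset V
  simples_subset : simples ⊆ posRoots
  posRoots_subset : posRoots ⊆ roots
  roots_pos_or_neg : ∀ α ∈ roots, α ∈ posRoots ∨ -α ∈ posRoots
  posRoots_not_neg : ∀ α ∈ posRoots, -α ∉ posRoots
  simples_linearIndependent : LinearIndependent ℝ (fun β : {x // x ∈ simples} => (β : V))
  posRoots_nonneg_comb : ∀ α ∈ posRoots, ∃ c : V → ℝ,
    (∀ β ∈ simples, 0 ≤ c β) ∧ α = ∑ β ∈ simples, c β • β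
  -- the Weyl group, acting on V and V∨, generated by the reflections s_α
  s : V → W
  actV : W →* V ≃ₗ[ℝ] V
  actVd : W →* Vd ≃ₗ[ℝ] Vd
  actV_s : ∀ α ∈ roots, ∀ v : V, actV (s α) v = v - pairR v (cv α) • α
  actVd_s : ∀ α ∈ roots, ∀ u : Vd, actVd (s α) u = u - pairR α u • cv α
  act_pair : ∀ (w : W) (v : V) (u : Vd), pairR (actV w v) (actVd w u) = pairR v u
  actV_faithful : ∀ w : W, (∀ v : V, actV w v = v) → w = 1
  gen_by_refl : Subgroup.closure (s '' roots) = (⊤ : Subgroup W)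
  actV_roots : ∀ (w : W), ∀ α ∈ roots, actV w α ∈ roots
  -- the longest element
  w0 : W
  w0_neg : ∀ α ∈ posRoots, -(actV w0 α) ∈ posRoots
  w0_unique : ∀ w : W, (∀ α ∈ posRoots, -(actV w α) ∈ posRoots) → w = w0
  -- the parameter function k (extended W-invariantly to all roots)
  kpar : V → ℝ
  kpar_invariant : ∀ (w : W), ∀ α ∈ roots, kpar (actV w α) = kpar α
  -- complexifications of V and V∨, with real and imaginary parts
  iV : V →+ VC
  iVd : Vd →+ VdC
  iV_smul : ∀ (r : ℝ) (v : V), iV (r • v) = (r : ℂ) • iV v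
  iVd_smul : ∀ (r : ℝ) (u : Vd), iVd (r • u) = (r : ℂ) • iVd u
  reV : VC →+ V
  imV : VC →+ V
  reVd : VdC →+ Vd
  imVd : VdC →+ Vd
  reV_iV : ∀ v : V, reV (iV v) = v
  imV_iV : ∀ v : V, imV (iV v) = 0
  reVd_iVd : ∀ u : Vd, reVd (iVd u) = u
  imVd_iVd : ∀ u : Vd, imVd (iVd u) = 0
  vc_decomp : ∀ x : VC, x = iV (reV x) + Complex.I • iV (imV x)
  vdc_decomp : ∀ y : VdC, y = iVd (reVd y) + Complex.I • iVd (imVd y)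
  reV_real_smul : ∀ (r : ℝ) (x : VC), reV ((r : ℂ) • x) = r • reV x
  imV_real_smul : ∀ (r : ℝ) (x : VC), imV ((r : ℂ) • x) = r • imV x
  reVd_real_smul : ∀ (r : ℝ) (y : VdC), reVd ((r : ℂ) • y) = r • reVd y
  imVd_real_smul : ∀ (r : ℝ) (y : VdC), imVd ((r : ℂ) • y) = r • imVd y
  -- the complex bilinear extension of the pairing
  pairC : VC → VdC → ℂ
  pairC_add_left : ∀ x x' y, pairC (x + x') y = pairC x y + pairC x' y
  pairC_add_right : ∀ x y y', pairC x (y + y') = pairC x y + pairC x y'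
  pairC_smul_left : ∀ (c : ℂ) x y, pairC (c • x) y = c * pairC x y
  pairC_smul_right : ∀ (c : ℂ) x y, pairC x (c • y) = c * pairC x y
  pairC_compat : ∀ (v : V) (u : Vd), pairC (iV v) (iVd u) = (pairR v u : ℂ)
  -- the complexified Weyl group actions
  actVC : W →* VC ≃ₗ[ℂ] VC
  actVdC : W →* VdC ≃ₗ[ℂ] VdC
  actVC_iV : ∀ (w : W) (v : V), actVC w (iV v) = iV (actV w v)
  actVdC_iVd : ∀ (w : W) (u : Vd), actVdC w (iVd u) = iVd (actVd w u)
  -- the graded affine Hecke algebra H: elements t_w and the subalgebra S(V_ℂ)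
  t : W → H
  t_one : t 1 = 1
  t_mul : ∀ w w', t w * t w' = t (w * w')
  θ : VC → H
  θ_add : ∀ x y, θ (x + y) = θ x + θ y
  θ_smul : ∀ (c : ℂ) (x : VC), θ (c • x) = c • θ x
  θ_comm : ∀ x y, θ x * θ y = θ y * θ x
  -- the graded Hecke algebra cross relation
  cross_rel : ∀ α ∈ simples, ∀ ω : VC,
    θ ω * t (s α) = t (s α) * θ (actVC (s α) ω)
      + algebraMap ℂ H ((kpar α : ℂ) * pairC ω (iVd (cv α)))
  -- H ≅ ℂ[W] ⊗ S(V_ℂ) as a (ℂ[W], S(V_ℂ))-bimodule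
  pbw_span : ∀ h : H, ∃ c : W → Algebra.adjoin ℂ (Set.range θ),
    h = ∑ w : W, t w * (c w : H)
  pbw_indep : ∀ c : W → Algebra.adjoin ℂ (Set.range θ),
    ∑ w : W, t w * (c w : H) = 0 → ∀ w, c w = 0
  -- the subalgebra generated by θ(V_ℂ) is the symmetric algebra S(V_ℂ)
  poly_univ : ∀ (B : Type) [CommRing B] [Algebra ℂ B] (f : VC → B),
    (∀ x y, f (x + y) = f x + f y) → (∀ (c : ℂ) x, f (c • x) = c • f x) →
    ∃! g : Algebra.adjoin ℂ (Set.range θ) →ₐ[ℂ] B,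
      ∀ x : VC, g ⟨θ x, Algebra.subset_adjoin ⟨x, rfl⟩⟩ = f x

attribute [instance] GHA.addV GHA.modV GHA.fdV GHA.addVd GHA.modVd GHA.fdVd
  GHA.deqV GHA.deqW GHA.addVC GHA.modVC GHA.addVdC GHA.modVdC GHA.grpW GHA.finW
  GHA.ringH GHA.algH

namespace GHA

/-- Complex conjugation on V_ℂ. -/
def conjVC (D : GHA) (x : D.VC) : D.VC := D.iV (D.reV x) - Complex.I • D.iV (D.imV x)

/-- Complex conjugation on V∨_ℂ. -/
def conjVdC (D : GHA) (y : D.VdC) : D.VdC := D.iVd (D.reVd y) - Complex.I • D.iVd (D.imVd y)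

/-- The bullet operation: conjugate-linear anti-automorphism with t_w ↦ t_{w⁻¹},
ω ↦ conj ω. -/
structure IsBullet (D : GHA) (f : D.H → D.H) : Prop where
  map_add : ∀ x y, f (x + y) = f x + f y
  map_smul : ∀ (c : ℂ) (x : D.H), f (c • x) = (starRingEnd ℂ) c • f x
  map_mul : ∀ x y, f (x * y) = f y * f x
  map_one : f 1 = 1
  map_t : ∀ w : D.W, f (D.t w) = D.t w⁻¹
  map_theta : ∀ x : D.VC, f (D.θ x) = D.θ (D.conjVC x)

/-- The star operation: conjugate-linear anti-automorphism with t_w ↦ t_{w⁻¹},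
ω ↦ −t_{w₀}·conj(w₀(ω))·t_{w₀}. -/
structure IsStar (D : GHA) (f : D.H → D.H) : Prop where
  map_add : ∀ x y, f (x + y) = f x + f y
  map_smul : ∀ (c : ℂ) (x : D.H), f (c • x) = (starRingEnd ℂ) c • f x
  map_mul : ∀ x y, f (x * y) = f y * f x
  map_one : f 1 = 1
  map_t : ∀ w : D.W, f (D.t w) = D.t w⁻¹
  map_theta : ∀ x : D.VC,
    f (D.θ x) = -(D.t D.w0 * D.θ (D.conjVC (D.actVC D.w0 x)) * D.t D.w0)

/-- The automorphism δ: t_w ↦ t_{w₀ww₀}, ω ↦ −w₀(ω). -/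
structure IsDelta (D : GHA) (f : D.H → D.H) : Prop where
  map_add : ∀ x y, f (x + y) = f x + f y
  map_smul : ∀ (c : ℂ) (x : D.H), f (c • x) = c • f x
  map_mul : ∀ x y, f (x * y) = f x * f y
  map_one : f 1 = 1
  map_t : ∀ w : D.W, f (D.t w) = D.t (D.w0 * w * D.w0)
  map_theta : ∀ x : D.VC, f (D.θ x) = -(D.θ (D.actVC D.w0 x))

/-- The standing assumption k_{−w₀(α)} = k_α for α ∈ Π. -/
def KSymm (D : GHA) : Prop := ∀ α ∈ D.simples, D.kpar (-(D.actV D.w0 α)) = D.kpar α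

section Forms

variable {X : Type} [AddCommGroup X] [Module ℂ X]

/-- Sesquilinear form (conjugate-linear in the first variable). -/
def SesqForm (B : X → X → ℂ) : Prop :=
  (∀ x x' y, B (x + x') y = B x y + B x' y) ∧
  (∀ x y y', B x (y + y') = B x y + B x y') ∧
  (∀ (c : ℂ) (x y : X), B (c • x) y = (starRingEnd ℂ) c * B x y) ∧
  (∀ (c : ℂ) (x y : X), B x (c • y) = c * B x y)

/-- Hermitian form. -/
def HermForm (B : X → X → ℂ) : Prop := ∀ x y, B x y = (starRingEnd ℂ) (B y x)

/-- κ-invariance of a form: ⟨π(h)x, y⟩ = ⟨x, π(κ(h))y⟩. -/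
def InvForm (D : GHA) (π : D.H →ₐ[ℂ] Module.End ℂ X) (κ : D.H → D.H)
    (B : X → X → ℂ) : Prop :=
  ∀ (h : D.H) (x y : X), B (π h x) y = B x (π (κ h) y)

end Forms

/-- Irreducibility of a representation of a ℂ-algebra A on X. -/
def IsIrrRep (A : Type) [Ring A] [Algebra ℂ A] {X : Type} [AddCommGroup X]
    [Module ℂ X] (π : A →ₐ[ℂ] Module.End ℂ X) : Prop :=
  Nontrivial X ∧ ∀ U : Submodule ℂ X, (∀ (a : A), ∀ x ∈ U, π a x ∈ U) → U = ⊥ ∨ U = ⊤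

/-- Generalized weight space for a commuting family of operators indexed by V_ℂ. -/
def wtAux (D : GHA) {X : Type} [AddCommGroup X] [Module ℂ X]
    (T : D.VC → Module.End ℂ X) (lam : D.VdC) : Submodule ℂ X where
  carrier := {x | ∀ ω : D.VC, ∃ n : ℕ,
    ((T ω - D.pairC ω lam • (1 : Module.End ℂ X)) ^ n) x = 0}
  zero_mem' := fun ω => ⟨1, by simp⟩
  add_mem' := by
    intro a b ha hb
    intro ω
    obtain ⟨n, hn⟩ := ha ω
    obtain ⟨m, hm⟩ := hb ω
    refine ⟨n + m, ?_⟩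
    have hA : ((T ω - D.pairC ω lam • (1 : Module.End ℂ X)) ^ (n + m)) a = 0 := by
      rw [add_comm, pow_add, Module.End.mul_apply, hn, map_zero]
    have hB : ((T ω - D.pairC ω lam • (1 : Module.End ℂ X)) ^ (n + m)) b = 0 := by
      rw [pow_add, Module.End.mul_apply, hm, map_zero]
    rw [map_add, hA, hB, add_zero]
  smul_mem' := by
    intro c a ha ω
    obtain ⟨n, hn⟩ := ha ω
    exact ⟨n, by rw [map_smul, hn, smul_zero]⟩

/-- Generalized A-weight space X_λ of an H-module. -/
def wtH (D : GHA) {X : Type} [AddCommGroup X] [Module ℂ X]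
    (π : D.H →ₐ[ℂ] Module.End ℂ X) (lam : D.VdC) : Submodule ℂ X :=
  D.wtAux (fun ω => π (D.θ ω)) lam

/-- The set Ω(X) of A-weights of an H-module. -/
def OmegaH (D : GHA) {X : Type} [AddCommGroup X] [Module ℂ X]
    (π : D.H →ₐ[ℂ] Module.End ℂ X) : Set D.VdC :=
  {lam | D.wtH π lam ≠ ⊥}

/-- Casselman's criterion for temperedness. -/
def IsTempered (D : GHA) {X : Type} [AddCommGroup X] [Module ℂ X]
    (π : D.H →ₐ[ℂ] Module.End ℂ X) : Prop :=
  ∀ lam ∈ D.OmegaH π, ∀ ω : D.V,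
    (∀ α ∈ D.simples, 0 < D.pairR ω (D.cv α)) → D.pairR ω (D.reVd lam) ≤ 0

section Parabolic

variable (D : GHA) (PiM : Finset D.V)

/-- The parabolic subgroup W_M. -/
def WM : Subgroup D.W := Subgroup.closure (D.s '' (PiM : Set D.V))

/-- The positive roots R⁺_M lying in the span of Π_M. -/
def RplusM : Set D.V :=
  {α | α ∈ D.posRoots ∧ α ∈ Submodule.span ℝ (PiM : Set D.V)}

/-- x is the minimal length representative of x·W_M, i.e. x(R⁺_M) ⊆ R⁺. -/
def IsMinRep (x : D.W) : Prop := ∀ α ∈ D.RplusM PiM, D.actV x α ∈ D.posRoots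

/-- The set J_M of minimal length coset representatives. -/
abbrev JM : Type := {x : D.W // D.IsMinRep PiM x}

/-- The parabolic subalgebra H_M. -/
def HM : Subalgebra ℂ D.H :=
  Algebra.adjoin ℂ (Set.range D.θ ∪ (D.t '' ((D.WM PiM : Subgroup D.W) : Set D.W)))

/-- t_w as an element of H_M, for w ∈ W_M. -/
def tM (w : D.W) (hw : w ∈ D.WM PiM) : D.HM PiM :=
  ⟨D.t w, Algebra.subset_adjoin (Or.inr ⟨w, hw, rfl⟩)⟩

/-- θ(ω) as an element of H_M. -/
def θM (x : D.VC) : D.HM PiM :=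
  ⟨D.θ x, Algebra.subset_adjoin (Or.inl ⟨x, rfl⟩)⟩

/-- Π_{δ(M)} = −w₀(Π_M). -/
def deltaSimples : Finset D.V := PiM.image (fun α => -(D.actV D.w0 α))

/-- w is the longest element of W_M. -/
def IsLongest (w : D.W) : Prop :=
  w ∈ D.WM PiM ∧ ∀ α ∈ D.RplusM PiM, -(D.actV w α) ∈ D.RplusM PiM

end Parabolic

/-- The unique factorization z = c_M(z)·m_M(z) with c_M(z) minimal in z·W_M and
m_M(z) ∈ W_M. -/
structure CosetData (D : GHA) (PiM : Finset D.V) where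
  c : D.W → D.W
  m : D.W → D.W
  c_min : ∀ z, D.IsMinRep PiM (c z)
  m_mem : ∀ z, m z ∈ D.WM PiM
  factor : ∀ z, z = c z * m z
  uniq : ∀ (z c' m' : D.W), D.IsMinRep PiM c' → m' ∈ D.WM PiM → z = c' * m' →
    c' = c z ∧ m' = m z

/-- The defining formulas for the H-action on the parabolically induced module
X(M,σ) = H ⊗_{H_M} U, realized on ⊕_{x ∈ J_M} U. -/
def IsInducedAction (D : GHA) (PiM : Finset D.V) (cd : CosetData D PiM)
    {U : Type} [AddCommGroup U] [Module ℂ U]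
    (σ : D.HM PiM →ₐ[ℂ] Module.End ℂ U)
    (πI : D.H →ₐ[ℂ] Module.End ℂ (D.JM PiM → U)) : Prop :=
  (∀ (z : D.W) (x : D.JM PiM) (v : U),
      πI (D.t z) (Pi.single x v) =
        Pi.single (⟨cd.c (z * x.1), cd.c_min _⟩ : D.JM PiM)
          (σ (D.tM PiM (cd.m (z * x.1)) (cd.m_mem _)) v)) ∧
  (∀ (ω : D.VC) (x : D.JM PiM) (v : U),
      πI (D.θ ω) (Pi.single x v) =
        Pi.single x (σ (D.θM PiM (D.actVC x.1⁻¹ ω)) v) +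
          ∑ β ∈ D.posRoots.filter (fun β => -(D.actV x.1⁻¹ β) ∈ D.posRoots),
            ((D.kpar β : ℂ) * D.pairC ω (D.iVd (D.cv β))) •
              (Pi.single (⟨cd.c (D.s β * x.1), cd.c_min _⟩ : D.JM PiM)
                (σ (D.tM PiM (cd.m (D.s β * x.1)) (cd.m_mem _)) v) : D.JM PiM → U))

end GHA
namespace GHA

variable (D : GHA)

lemma actV_mul_apply (w w' : D.W) (v : D.V) :
    D.actV (w * w') v = D.actV w (D.actV w' v) := by
  rw [map_mul]; rfl

lemma actV_sq_pos : ∀ α ∈ D.posRoots, D.actV (D.w0 * D.w0) α ∈ D.posRoots := by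
  intro α hα
  have h2 := D.w0_neg _ (D.w0_neg α hα)
  have h3 : -(D.actV D.w0 (-(D.actV D.w0 α))) = D.actV (D.w0 * D.w0) α := by
    rw [map_neg, neg_neg, ← D.actV_mul_apply]
  exact h3 ▸ h2

lemma w0_sq : D.w0 * D.w0 = 1 := by
  have h3 : D.w0 * (D.w0 * D.w0) = D.w0 := by
    apply D.w0_unique
    intro α hα
    have := D.w0_neg _ (D.actV_sq_pos α hα)
    rwa [← D.actV_mul_apply] at this
  exact mul_left_cancel (h3.trans (mul_one D.w0).symm)

lemma w0_inv : D.w0⁻¹ = D.w0 :=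
  inv_eq_of_mul_eq_one_left D.w0_sq

lemma t0_sq : D.t D.w0 * D.t D.w0 = 1 := by
  rw [D.t_mul, D.w0_sq, D.t_one]

lemma reim_I (b : D.V) :
    D.reV (Complex.I • D.iV b) = 0 ∧ D.imV (Complex.I • D.iV b) = b := by
  set r := D.reV (Complex.I • D.iV b) with hr
  set m := D.imV (Complex.I • D.iV b) with hm
  have hdec : Complex.I • D.iV b = D.iV r + Complex.I • D.iV m := D.vc_decomp _
  have key : Complex.I • D.iV (b - m) = D.iV r := by
    rw [map_sub, smul_sub, hdec]; abel
  have hz : ∀ u : D.Vd, D.pairR (b - m) u = 0 ∧ D.pairR r u = 0 := by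
    intro u
    have h1 : D.pairC (Complex.I • D.iV (b - m)) (D.iVd u)
        = Complex.I * ((D.pairR (b - m) u : ℝ) : ℂ) := by
      rw [D.pairC_smul_left, D.pairC_compat]
    have h2 : D.pairC (Complex.I • D.iV (b - m)) (D.iVd u) = ((D.pairR r u : ℝ) : ℂ) := by
      rw [key, D.pairC_compat]
    have h3 : Complex.I * ((D.pairR (b - m) u : ℝ) : ℂ) = ((D.pairR r u : ℝ) : ℂ) := by
      rw [← h1, h2]
    constructor
    · have := congrArg Complex.im h3; simpa using this
    · have := congrArg Complex.re h3; simpa using this.symm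
  have h4 : b - m = 0 := D.pair_nondeg_left _ fun u => (hz u).1
  have h5 : r = 0 := D.pair_nondeg_left _ fun u => (hz u).2
  exact ⟨h5, (sub_eq_zero.mp h4).symm⟩

lemma reV_decomp_ab (a b : D.V) : D.reV (D.iV a + Complex.I • D.iV b) = a := by
  rw [map_add, D.reV_iV, (D.reim_I b).1, add_zero]

lemma imV_decomp_ab (a b : D.V) : D.imV (D.iV a + Complex.I • D.iV b) = b := by
  rw [map_add, D.imV_iV, (D.reim_I b).2, zero_add]

lemma conjVC_ab (a b : D.V) :
    D.conjVC (D.iV a + Complex.I • D.iV b) = D.iV a - Complex.I • D.iV b := by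
  unfold conjVC
  rw [D.reV_decomp_ab, D.imV_decomp_ab]

lemma conjVC_eq (x : D.VC) :
    D.conjVC x = D.iV (D.reV x) - Complex.I • D.iV (D.imV x) := rfl

lemma conjVC_conjVC (x : D.VC) : D.conjVC (D.conjVC x) = x := by
  have h1 : D.conjVC x = D.iV (D.reV x) + Complex.I • D.iV (-(D.imV x)) := by
    rw [D.conjVC_eq, map_neg, smul_neg, sub_eq_add_neg]
  rw [h1, D.conjVC_ab, map_neg, smul_neg, sub_neg_eq_add, ← D.vc_decomp x]

lemma conjVC_actVC (w : D.W) (x : D.VC) :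
    D.conjVC (D.actVC w x) = D.actVC w (D.conjVC x) := by
  have hx := D.vc_decomp x
  have h1 : D.actVC w x
      = D.iV (D.actV w (D.reV x)) + Complex.I • D.iV (D.actV w (D.imV x)) := by
    conv_lhs => rw [hx]
    rw [map_add, map_smul, D.actVC_iV, D.actVC_iV]
  rw [h1, D.conjVC_ab, D.conjVC_eq, map_sub, map_smul, D.actVC_iV, D.actVC_iV]

lemma actVC_w0_w0 (x : D.VC) : D.actVC D.w0 (D.actVC D.w0 x) = x := by
  have h : D.actVC (D.w0 * D.w0) x = D.actVC D.w0 (D.actVC D.w0 x) := by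
    rw [map_mul]; rfl
  rw [← h, D.w0_sq, map_one]; rfl

lemma adjoin_top : Algebra.adjoin ℂ (Set.range D.θ ∪ Set.range D.t) = ⊤ := by
  rw [eq_top_iff]
  intro h _
  obtain ⟨c, hc⟩ := D.pbw_span h
  rw [hc]
  refine Subalgebra.sum_mem _ fun w _ => mul_mem ?_ ?_
  · exact Algebra.subset_adjoin (Or.inr ⟨w, rfl⟩)
  · exact Algebra.adjoin_mono Set.subset_union_left (c w).2

lemma funext_of_gens (f g : D.H → D.H)
    (h1 : f 1 = g 1)
    (hsmul : ∀ (c : ℂ) (x : D.H), f x = g x → f (c • x) = g (c • x))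
    (hadd : ∀ x y : D.H, f x = g x → f y = g y → f (x + y) = g (x + y))
    (hmul : ∀ x y : D.H, f x = g x → f y = g y → f (x * y) = g (x * y))
    (ht : ∀ w : D.W, f (D.t w) = g (D.t w))
    (hθ : ∀ x : D.VC, f (D.θ x) = g (D.θ x)) :
    ∀ h : D.H, f h = g h := by
  have hzero : f 0 = g 0 := by
    have := hsmul 0 1 h1
    simpa using this
  let S : Subalgebra ℂ D.H :=
    { carrier := {x : D.H | f x = g x}
      mul_mem' := fun ha hb => hmul _ _ ha hb
      one_mem' := h1
      add_mem' := fun ha hb => hadd _ _ ha hb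
      zero_mem' := hzero
      algebraMap_mem' := fun c => by
        have := hsmul c 1 h1
        simpa [Algebra.algebraMap_eq_smul_one] using this }
  have hle : Algebra.adjoin ℂ (Set.range D.θ ∪ Set.range D.t) ≤ S := by
    apply Algebra.adjoin_le
    rintro x (⟨v, rfl⟩ | ⟨w, rfl⟩)
    exacts [hθ v, ht w]
  intro h
  exact hle (by rw [D.adjoin_top]; exact Algebra.mem_top)

lemma sandwich (a b : D.H) :
    (D.t D.w0 * a * D.t D.w0) * (D.t D.w0 * b * D.t D.w0)
      = D.t D.w0 * (a * b) * D.t D.w0 := by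
  have h := D.t0_sq
  calc (D.t D.w0 * a * D.t D.w0) * (D.t D.w0 * b * D.t D.w0)
      = D.t D.w0 * (a * ((D.t D.w0 * D.t D.w0) * (b * D.t D.w0))) := by
        simp only [mul_assoc]
    _ = D.t D.w0 * (a * b) * D.t D.w0 := by
        rw [h, one_mul]; simp only [mul_assoc]

lemma map_neg_of_csmul {f : D.H → D.H}
    (hs : ∀ (c : ℂ) (x : D.H), f (c • x) = (starRingEnd ℂ) c • f x) (x : D.H) :
    f (-x) = -f x := by
  have := hs (-1) x
  simpa using this

lemma map_neg_of_smul {f : D.H → D.H}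
    (hs : ∀ (c : ℂ) (x : D.H), f (c • x) = c • f x) (x : D.H) :
    f (-x) = -f x := by
  have := hs (-1) x
  simpa using this

end GHA
namespace GHA

variable (D : GHA)

lemma st_eq {bul st del : D.H → D.H} (hb : D.IsBullet bul) (hs : D.IsStar st)
    (hd : D.IsDelta del) (h : D.H) :
    st h = D.t D.w0 * bul (del h) * D.t D.w0 := by
  refine D.funext_of_gens st (fun h => D.t D.w0 * bul (del h) * D.t D.w0)
    ?_ ?_ ?_ ?_ ?_ ?_ h
  · rw [hs.map_one, hd.map_one, hb.map_one, mul_one, D.t0_sq]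
  · intro c x hx
    rw [hs.map_smul, hd.map_smul, hb.map_smul, hx, mul_smul_comm, smul_mul_assoc]
  · intro x y hx hy
    rw [hs.map_add, hd.map_add, hb.map_add, hx, hy, mul_add, add_mul]
  · intro x y hx hy
    rw [hs.map_mul, hd.map_mul, hb.map_mul, hx, hy, D.sandwich]
  · intro w
    have hg : D.w0 * (D.w0 * w * D.w0)⁻¹ * D.w0 = w⁻¹ := by group
    rw [hs.map_t, hd.map_t, hb.map_t, D.t_mul, D.t_mul, hg]
  · intro x
    rw [hs.map_theta, hd.map_theta, D.map_neg_of_csmul hb.map_smul, hb.map_theta,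
      mul_neg, neg_mul]

lemma del_del {del : D.H → D.H} (hd : D.IsDelta del) (h : D.H) :
    del (del h) = h := by
  refine D.funext_of_gens (fun h => del (del h)) (fun h => h) ?_ ?_ ?_ ?_ ?_ ?_ h
  · rw [hd.map_one, hd.map_one]
  · intro c x hx
    rw [hd.map_smul, hd.map_smul, hx]
  · intro x y hx hy
    rw [hd.map_add, hd.map_add, hx, hy]
  · intro x y hx hy
    rw [hd.map_mul, hd.map_mul, hx, hy]
  · intro w
    rw [hd.map_t, hd.map_t]
    congr 1
    have h2 := D.w0_sq
    calc D.w0 * (D.w0 * w * D.w0) * D.w0 = D.w0 * D.w0 * w * (D.w0 * D.w0) := by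
          simp only [mul_assoc]
      _ = w := by rw [h2, one_mul, mul_one]
  · intro x
    rw [hd.map_theta, D.map_neg_of_smul hd.map_smul, hd.map_theta, neg_neg,
      D.actVC_w0_w0]

lemma st_st {st : D.H → D.H} (hs : D.IsStar st) (h : D.H) :
    st (st h) = h := by
  refine D.funext_of_gens (fun h => st (st h)) (fun h => h) ?_ ?_ ?_ ?_ ?_ ?_ h
  · rw [hs.map_one, hs.map_one]
  · intro c x hx
    rw [hs.map_smul, hs.map_smul, hx, Complex.conj_conj]
  · intro x y hx hy
    rw [hs.map_add, hs.map_add, hx, hy]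
  · intro x y hx hy
    rw [hs.map_mul, hs.map_mul, hx, hy]
  · intro w
    rw [hs.map_t, hs.map_t, inv_inv]
  · intro x
    rw [hs.map_theta, D.map_neg_of_csmul hs.map_smul, hs.map_mul, hs.map_mul,
      hs.map_t, D.w0_inv, hs.map_theta, D.conjVC_actVC, D.conjVC_conjVC,
      D.actVC_w0_w0]
    simp only [neg_mul, mul_neg, neg_neg]
    have h2 := D.t0_sq
    calc D.t D.w0 * (D.t D.w0 * D.θ x * D.t D.w0 * D.t D.w0)
        = (D.t D.w0 * D.t D.w0) * (D.θ x * (D.t D.w0 * D.t D.w0)) := by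
          simp only [mul_assoc]
      _ = D.θ x := by rw [h2, one_mul, mul_one]

lemma st_del {bul st del : D.H → D.H} (hb : D.IsBullet bul) (hs : D.IsStar st)
    (hd : D.IsDelta del) (h : D.H) :
    st (del h) = D.t D.w0 * bul h * D.t D.w0 := by
  rw [D.st_eq hb hs hd, D.del_del hd]

lemma nondeg_left {X : Type} [AddCommGroup X] [Module ℂ X]
    (π : D.H →ₐ[ℂ] Module.End ℂ X) (hirr : IsIrrRep D.H π)
    (κ : D.H → D.H) (B : X → X → ℂ) (hsesq : SesqForm B)
    (hne : ∃ x y, B x y ≠ 0) (hinv : D.InvForm π κ B) :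
    ∀ x : X, (∀ y, B x y = 0) → x = 0 := by
  have hB0 : ∀ y, B 0 y = 0 := fun y => by
    have := hsesq.2.2.1 0 0 y
    simpa using this
  let U : Submodule ℂ X :=
    { carrier := {x | ∀ y, B x y = 0}
      add_mem' := fun ha hb y => by rw [hsesq.1, ha y, hb y, add_zero]
      zero_mem' := hB0
      smul_mem' := fun c x hx y => by rw [hsesq.2.2.1, hx y, mul_zero] }
  have hstab : ∀ (a : D.H), ∀ x ∈ U, π a x ∈ U := fun a x hx y => by
    rw [hinv a x y]; exact hx _
  rcases hirr.2 U hstab with hU | hU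
  · intro x hx
    have hmem : x ∈ U := hx
    rw [hU] at hmem
    simpa using hmem
  · exfalso
    obtain ⟨x, y, hxy⟩ := hne
    exact hxy ((show x ∈ U by rw [hU]; trivial) y)

end GHA
open GHA in
/-- for an irreducible module with a nonzero •-invariant hermitian
form, a nonzero ★-invariant hermitian form exists iff the δ-twist is isomorphic
to the module. -/
theorem stmt_10 (D : GHA) (hk : D.KSymm) (bul st del : D.H → D.H)
    (hb : D.IsBullet bul) (hs : D.IsStar st) (hd : D.IsDelta del)
    {X : Type} [AddCommGroup X] [Module ℂ X] [FiniteDimensional ℂ X]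
    (π : D.H →ₐ[ℂ] Module.End ℂ X) (hirr : GHA.IsIrrRep D.H π)
    (B : X → X → ℂ) (hsesq : SesqForm B) (hherm : HermForm B)
    (hne : ∃ x y, B x y ≠ 0) (hinv : D.InvForm π bul B) :
    (∃ B' : X → X → ℂ, SesqForm B' ∧ HermForm B' ∧ (∃ x y, B' x y ≠ 0) ∧
        D.InvForm π st B') ↔
    (∃ T : X ≃ₗ[ℂ] X, ∀ (h : D.H) (x : X), T (π (del h) x) = π h (T x)) := by
  have hPP : ∀ x : X, π (D.t D.w0) (π (D.t D.w0) x) = x := by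
    intro x
    have h1 : π (D.t D.w0) * π (D.t D.w0) = 1 := by
      rw [← map_mul, D.t0_sq, map_one]
    calc π (D.t D.w0) (π (D.t D.w0) x) = (π (D.t D.w0) * π (D.t D.w0)) x := rfl
      _ = x := by rw [h1]; rfl
  have hBzero : ∀ y : X, B 0 y = 0 := fun y => by
    have := hsesq.2.2.1 0 0 y
    simpa using this
  have hBsub : ∀ (a b y : X), B (a - b) y = B a y - B b y := by
    intro a b y
    have hab : a - b + b = a := by abel
    have h := hsesq.1 (a - b) b y
    rw [hab] at h
    rw [h]; ring
  have hstt0 : st (D.t D.w0) = D.t D.w0 := by rw [hs.map_t, D.w0_inv]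
  have ndB : ∀ x : X, (∀ y, B x y = 0) → x = 0 :=
    D.nondeg_left π hirr bul B hsesq hne hinv
  constructor
  · -- forms → intertwiner
    rintro ⟨B', hs', hh', hn', hi'⟩
    have ndB' : ∀ x : X, (∀ y, B' x y = 0) → x = 0 :=
      D.nondeg_left π hirr st B' hs' hn' hi'
    have key2 : ∀ (h : D.H) (x y : X),
        B' (π (D.t D.w0) (π (del h) x)) y
          = B' (π (D.t D.w0) x) (π (bul h) y) := by
      intro h x y
      have e1 : π (D.t D.w0) (π (del h) x) = π (D.t D.w0 * del h) x := by
        rw [map_mul]; rfl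
      rw [e1, hi' (D.t D.w0 * del h) x y]
      have e2 : st (D.t D.w0 * del h) = D.t D.w0 * bul h := by
        rw [hs.map_mul, hstt0, D.st_del hb hs hd]
        calc D.t D.w0 * bul h * D.t D.w0 * D.t D.w0
            = D.t D.w0 * bul h * (D.t D.w0 * D.t D.w0) := by rw [mul_assoc]
          _ = D.t D.w0 * bul h := by rw [D.t0_sq, mul_one]
      have e3 : π (D.t D.w0 * bul h) y = π (D.t D.w0) (π (bul h) y) := by
        rw [map_mul]; rfl
      rw [e2, e3, hi' (D.t D.w0) x (π (bul h) y), hstt0]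
    -- the two "functional" maps
    let Φ : X →ₗ[ℝ] Module.Dual ℂ X :=
      { toFun := fun x =>
          { toFun := fun y => B x y
            map_add' := fun y y' => hsesq.2.1 x y y'
            map_smul' := fun c y => by
              simp only [RingHom.id_apply, smul_eq_mul]
              exact hsesq.2.2.2 c x y }
        map_add' := fun x x' => by
          ext y
          exact hsesq.1 x x' y
        map_smul' := fun r x => by
          ext y
          simp only [RingHom.id_apply, LinearMap.coe_mk, AddHom.coe_mk,
            LinearMap.smul_apply]
          rw [← Complex.coe_smul, hsesq.2.2.1, Complex.conj_ofReal,
            ← Complex.coe_smul]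
          simp [smul_eq_mul] }
    have hΦapp : ∀ (x y : X), Φ x y = B x y := fun x y => rfl
    have hinjΦ : Function.Injective Φ := by
      rw [injective_iff_map_eq_zero Φ]
      intro x hx
      apply ndB x
      intro y
      have h1 := LinearMap.congr_fun hx y
      rw [hΦapp] at h1
      simpa using h1
    have hdim : Module.finrank ℝ X = Module.finrank ℝ (Module.Dual ℂ X) := by
      rw [← Module.finrank_mul_finrank ℝ ℂ X,
        ← Module.finrank_mul_finrank ℝ ℂ (Module.Dual ℂ X),
        Subspace.dual_finrank_eq]
    let e := LinearMap.linearEquivOfInjective Φ hinjΦ hdim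
    have heΦ : ∀ x : X, e x = Φ x := fun x =>
      LinearMap.linearEquivOfInjective_apply hinjΦ hdim x
    -- cf x : the functional y ↦ B' (π t0 x) y
    let cf : X → Module.Dual ℂ X := fun x =>
      { toFun := fun y => B' (π (D.t D.w0) x) y
        map_add' := fun y y' => hs'.2.1 _ y y'
        map_smul' := fun c y => by
          simp only [RingHom.id_apply, smul_eq_mul]
          exact hs'.2.2.2 c _ y }
    let T0 : X → X := fun x => e.symm (cf x)
    have hΦT0 : ∀ x : X, Φ (T0 x) = cf x := by
      intro x
      have := heΦ (e.symm (cf x))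
      rw [e.apply_symm_apply] at this
      exact this.symm
    have hT0B : ∀ x y : X, B (T0 x) y = B' (π (D.t D.w0) x) y := by
      intro x y
      have := LinearMap.congr_fun (hΦT0 x) y
      exact this
    have hT0add : ∀ x x' : X, T0 (x + x') = T0 x + T0 x' := by
      intro x x'
      apply hinjΦ
      rw [map_add, hΦT0, hΦT0, hΦT0]
      ext y
      show B' (π (D.t D.w0) (x + x')) y = B' (π (D.t D.w0) x) y + B' (π (D.t D.w0) x') y
      rw [map_add]
      exact hs'.1 _ _ y
    have hT0smul : ∀ (c : ℂ) (x : X), T0 (c • x) = c • T0 x := by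
      intro c x
      apply hinjΦ
      refine LinearMap.ext fun y => ?_
      have h1 : Φ (T0 (c • x)) y = B' (π (D.t D.w0) (c • x)) y := hT0B _ y
      have h2 : Φ (c • T0 x) y = (starRingEnd ℂ) c * B (T0 x) y := by
        show B (c • T0 x) y = _
        exact hsesq.2.2.1 c _ y
      rw [h1, h2, hT0B, map_smul]
      exact hs'.2.2.1 c _ y
    let Tlin : X →ₗ[ℂ] X :=
      { toFun := T0
        map_add' := hT0add
        map_smul' := fun c x => hT0smul c x }
    have hT0inj : Function.Injective Tlin := by
      rw [injective_iff_map_eq_zero Tlin]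
      intro x hx
      have h0 : T0 x = 0 := hx
      have h1 : ∀ y, B' (π (D.t D.w0) x) y = 0 := by
        intro y
        rw [← hT0B x y, h0]
        exact hBzero y
      have h2 : π (D.t D.w0) x = 0 := ndB' _ h1
      have := hPP x
      rw [h2, map_zero] at this
      exact this.symm
    have hT0surj : Function.Surjective Tlin :=
      (LinearMap.injective_iff_surjective_of_finrank_eq_finrank rfl).mp hT0inj
    refine ⟨LinearEquiv.ofBijective Tlin ⟨hT0inj, hT0surj⟩, fun h x => ?_⟩
    show T0 (π (del h) x) = π h (T0 x)
    have hy : ∀ y, B (T0 (π (del h) x)) y = B (π h (T0 x)) y := by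
      intro y
      rw [hT0B, key2 h x y, ← hT0B x, ← hinv h (T0 x) y]
    have hdiff : ∀ y, B (T0 (π (del h) x) - π h (T0 x)) y = 0 := fun y => by
      rw [hBsub, hy y, sub_self]
    exact sub_eq_zero.mp (ndB _ hdiff)
  · -- intertwiner → forms
    rintro ⟨T, hT⟩
    have hTsymm : ∀ (h : D.H) (y : X), T.symm (π h y) = π (del h) (T.symm y) := by
      intro h y
      apply T.injective
      rw [T.apply_symm_apply, hT h (T.symm y), T.apply_symm_apply]
    have hbul_sand : ∀ h : D.H, bul (D.t D.w0 * del h * D.t D.w0) = st h := by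
      intro h
      rw [hb.map_mul, hb.map_mul, hb.map_t, D.w0_inv, ← mul_assoc,
        D.st_eq hb hs hd h]
    let B0 : X → X → ℂ := fun x y => B (π (D.t D.w0) (T.symm x)) y
    have inv0 : ∀ (h : D.H) (x y : X), B0 (π h x) y = B0 x (π (st h) y) := by
      intro h x y
      show B (π (D.t D.w0) (T.symm (π h x))) y
        = B (π (D.t D.w0) (T.symm x)) (π (st h) y)
      rw [hTsymm h x]
      have e1 : π (D.t D.w0) (π (del h) (T.symm x))
          = π (D.t D.w0 * del h * D.t D.w0) (π (D.t D.w0) (T.symm x)) := by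
        have hgrp : (D.t D.w0 * del h * D.t D.w0) * D.t D.w0 = D.t D.w0 * del h := by
          rw [mul_assoc, D.t0_sq, mul_one]
        calc π (D.t D.w0) (π (del h) (T.symm x)) = π (D.t D.w0 * del h) (T.symm x) := by
              rw [map_mul]; rfl
          _ = π ((D.t D.w0 * del h * D.t D.w0) * D.t D.w0) (T.symm x) := by rw [hgrp]
          _ = _ := by rw [map_mul]; rfl
      rw [e1, hinv (D.t D.w0 * del h * D.t D.w0) _ y, hbul_sand h]
    have sesq0 : SesqForm B0 := by
      refine ⟨?_, ?_, ?_, ?_⟩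
      · intro x x' y
        show B (π (D.t D.w0) (T.symm (x + x'))) y = _
        rw [map_add, map_add]
        exact hsesq.1 _ _ y
      · intro x y y'
        exact hsesq.2.1 _ y y'
      · intro c x y
        show B (π (D.t D.w0) (T.symm (c • x))) y = _
        rw [map_smul, map_smul]
        exact hsesq.2.2.1 c _ y
      · intro c x y
        exact hsesq.2.2.2 c _ y
    have ne0 : ∃ x y, B0 x y ≠ 0 := by
      obtain ⟨x0, y0, hxy⟩ := hne
      refine ⟨T (π (D.t D.w0) x0), y0, ?_⟩
      show B (π (D.t D.w0) (T.symm (T (π (D.t D.w0) x0)))) y0 ≠ 0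
      rw [T.symm_apply_apply, hPP]
      exact hxy
    have invc : ∀ (h : D.H) (x y : X),
        (starRingEnd ℂ) (B0 y (π h x)) = (starRingEnd ℂ) (B0 (π (st h) y) x) := by
      intro h x y
      congr 1
      rw [inv0 (st h) y x, D.st_st hs h]
    by_cases hc : ∃ x y : X, B0 x y + (starRingEnd ℂ) (B0 y x) ≠ 0
    · refine ⟨fun x y => B0 x y + (starRingEnd ℂ) (B0 y x), ?_, ?_, hc, ?_⟩
      · refine ⟨?_, ?_, ?_, ?_⟩
        · intro x x' y
          dsimp only
          rw [sesq0.1, sesq0.2.1, map_add]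
          ring
        · intro x y y'
          dsimp only
          rw [sesq0.2.1, sesq0.1, map_add]
          ring
        · intro c x y
          dsimp only
          rw [sesq0.2.2.1, sesq0.2.2.2, map_mul]
          ring
        · intro c x y
          dsimp only
          rw [sesq0.2.2.2, sesq0.2.2.1, map_mul, Complex.conj_conj]
          ring
      · intro x y
        dsimp only
        rw [map_add, Complex.conj_conj]
        ring
      · intro h x y
        dsimp only
        rw [inv0 h x y, invc h x y]
    · push_neg at hc
      refine ⟨fun x y => Complex.I * (B0 x y - (starRingEnd ℂ) (B0 y x)),
        ?_, ?_, ?_, ?_⟩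
      · refine ⟨?_, ?_, ?_, ?_⟩
        · intro x x' y
          dsimp only
          rw [sesq0.1, sesq0.2.1, map_add]
          ring
        · intro x y y'
          dsimp only
          rw [sesq0.2.1, sesq0.1, map_add]
          ring
        · intro c x y
          dsimp only
          rw [sesq0.2.2.1, sesq0.2.2.2, map_mul]
          ring
        · intro c x y
          dsimp only
          rw [sesq0.2.2.2, sesq0.2.2.1, map_mul, Complex.conj_conj]
          ring
      · intro x y
        dsimp only
        rw [map_mul, map_sub, Complex.conj_conj, Complex.conj_I]
        ring
      · obtain ⟨x0, y0, h0⟩ := ne0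
        refine ⟨x0, y0, ?_⟩
        dsimp only
        have hneg : (starRingEnd ℂ) (B0 y0 x0) = -B0 x0 y0 := by
          have := hc x0 y0
          linear_combination this
        rw [hneg]
        intro hcon
        apply h0
        have h2 : Complex.I * (2 * B0 x0 y0) = 0 := by
          rw [← hcon]; ring
        have h3 := mul_eq_zero.mp h2
        rcases h3 with h3 | h3
        · exact absurd h3 Complex.I_ne_zero
        · rcases mul_eq_zero.mp h3 with h4 | h4
          · norm_num at h4
          · exact h4
      · intro h x y
        dsimp only
        rw [inv0 h x y, invc h x y]
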